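/- Squared-kernel asymptotic (constant C₁): as h → 0⁺, h^{-d} ∫_{B̄(0,r)} K((φ(z) − x)/h)² v(φ(z)) f(z) dz converges to f(0) · v(x) · ∫_{ℝ^d} K(L u)² du. -/

import Mathlib

open MeasureTheory Metric Filter

/-- Squared-kernel asymptotic (constant C₁): as `h → 0⁺`,
`h^(-d) ∫_{B̄(0,r)} K((φ z − x)/h)² v(φ z) f z dz → f 0 · v x · ∫_{ℝ^d} K(L u)² du`. -/
theorem squared_kernel_C1
    (d D : ℕ) (hd : 0 < d) (hdD : d ≤ D) (r : ℝ) (hr : 0 < r)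
    (φ : EuclideanSpace ℝ (Fin d) → EuclideanSpace ℝ (Fin D))
    (hφ : ContDiff ℝ 1 φ)
    (c C : ℝ) (hc : 0 < c) (hcC : c ≤ C)
    (hbil : ∀ z ∈ closedBall (0 : EuclideanSpace ℝ (Fin d)) r,
      ∀ z' ∈ closedBall (0 : EuclideanSpace ℝ (Fin d)) r,
        c * ‖z - z'‖ ≤ ‖φ z - φ z'‖ ∧ ‖φ z - φ z'‖ ≤ C * ‖z - z'‖)
    (hL : Function.Injective (fderiv ℝ φ 0))
    (f : EuclideanSpace ℝ (Fin d) → ℝ)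
    (hf_meas : Measurable f)
    (hf_nonneg : ∀ z, 0 ≤ f z)
    (hf_supp : ∀ z ∉ closedBall (0 : EuclideanSpace ℝ (Fin d)) r, f z = 0)
    (hf_bdd : ∃ M : ℝ, ∀ z, f z ≤ M)
    (hf_prob : ∫ z, f z = 1)
    (hf_cont : ContinuousAt f 0) (hf_pos : 0 < f 0)
    (K : EuclideanSpace ℝ (Fin D) → ℝ)
    (hK_nonneg : ∀ u, 0 ≤ K u) (hK_cont : Continuous K)
    (hK_supp : HasCompactSupport K)
    (v : EuclideanSpace ℝ (Fin D) → ℝ)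
    (hv_nonneg : ∀ y, 0 ≤ v y)
    (hv_bdd : ∃ M : ℝ, ∀ y, v y ≤ M)
    (hv_meas : Measurable v)
    (hv_cont : ContinuousAt v (φ 0)) :
    Tendsto
      (fun h : ℝ =>
        (∫ z in closedBall (0 : EuclideanSpace ℝ (Fin d)) r,
            K (h⁻¹ • (φ z - φ 0)) ^ 2 * v (φ z) * f z) / h ^ d)
      (nhdsWithin 0 (Set.Ioi 0))
      (nhds (f 0 * v (φ 0) * ∫ u, K (fderiv ℝ φ 0 u) ^ 2)) := by
  obtain ⟨Mf, hMf⟩ := hf_bdd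
  obtain ⟨Mv, hMv⟩ := hv_bdd
  obtain ⟨Kb, hKb⟩ : ∃ Kb : ℝ, ∀ u, K u ≤ Kb := by
    obtain ⟨Kb, hKb⟩ := hK_cont.bounded_above_of_compact_support hK_supp
    exact ⟨Kb, fun u => (le_abs_self _).trans (by simpa [Real.norm_eq_abs] using hKb u)⟩
  obtain ⟨R, hR0, hRsupp⟩ : ∃ R : ℝ, 0 ≤ R ∧ tsupport K ⊆ closedBall 0 R := by
    obtain ⟨R, hR⟩ := hK_supp.isBounded.subset_closedBall 0
    exact ⟨max R 0, le_max_right _ _, hR.trans (closedBall_subset_closedBall (le_max_left _ _))⟩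
  have hMf0 : 0 ≤ Mf := (hf_nonneg 0).trans (hMf 0)
  have hMv0 : 0 ≤ Mv := (hv_nonneg (φ 0)).trans (hMv (φ 0))
  have hKb0 : 0 ≤ Kb := (hK_nonneg 0).trans (hKb 0)
  set L := fderiv ℝ φ 0 with hLdef
  set g : ℝ → EuclideanSpace ℝ (Fin d) → ℝ := fun h u =>
    K (h⁻¹ • (φ u - φ 0)) ^ 2 * v (φ u) * f u with hgdef
  have hφcont : Continuous φ := hφ.continuous
  -- step 1: set integral = full integral, and change of variables
  have hfin : Module.finrank ℝ (EuclideanSpace ℝ (Fin d)) = d := by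
    simp [finrank_euclideanSpace]
  have step1 : ∀ h : ℝ, 0 < h →
      (∫ z in closedBall (0 : EuclideanSpace ℝ (Fin d)) r, g h z) / h ^ d
        = ∫ u, g h (h • u) := by
    intro h hh
    rw [setIntegral_eq_integral_of_forall_compl_eq_zero (fun z hz => by
      simp [hgdef, hf_supp z hz])]
    rw [Measure.integral_comp_smul volume (g h) h, hfin, abs_of_nonneg
      (inv_nonneg.2 (pow_nonneg hh.le _)), smul_eq_mul]
    field_simp
  -- key dominated convergence
  have key : Tendsto (fun h : ℝ => ∫ u, g h (h • u)) (nhdsWithin 0 (Set.Ioi 0))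
      (nhds (∫ u, K (L u) ^ 2 * v (φ 0) * f 0)) := by
    apply tendsto_integral_filter_of_dominated_convergence
      (bound := Set.indicator (closedBall (0 : EuclideanSpace ℝ (Fin d)) (R / c))
        (fun _ => Kb ^ 2 * Mv * Mf))
    · filter_upwards with h
      apply Measurable.aestronglyMeasurable
      exact ((((hK_cont.measurable.comp ((measurable_const_smul h⁻¹).comp
        ((hφcont.measurable.comp (measurable_const_smul h)).sub measurable_const))).pow_const 2).mul
        (hv_meas.comp (hφcont.measurable.comp (measurable_const_smul h)))).mul
        (hf_meas.comp (measurable_const_smul h)))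
    · filter_upwards [self_mem_nhdsWithin] with h (hh : 0 < h)
      filter_upwards with u
      have hnn : 0 ≤ g h (h • u) := by
        exact mul_nonneg (mul_nonneg (pow_two_nonneg _) (hv_nonneg _)) (hf_nonneg _)
      rw [Real.norm_of_nonneg hnn]
      by_cases hu : u ∈ closedBall (0 : EuclideanSpace ℝ (Fin d)) (R / c)
      · rw [Set.indicator_of_mem hu]
        apply mul_le_mul (mul_le_mul ?_ (hMv _) (hv_nonneg _) (by positivity)) (hMf _)
          (hf_nonneg _) (by positivity)
        exact pow_le_pow_left₀ (hK_nonneg _) (hKb _) 2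
      · rw [Set.indicator_of_notMem hu]
        have hu' : R / c < ‖u‖ := by
          simpa [mem_closedBall, dist_zero_right, not_le] using hu
        by_cases hz : h • u ∈ closedBall (0 : EuclideanSpace ℝ (Fin d)) r
        · have hb := (hbil (h • u) hz 0 (mem_closedBall_self hr.le)).1
          rw [sub_zero] at hb
          have hK0 : K (h⁻¹ • (φ (h • u) - φ 0)) = 0 := by
            apply image_eq_zero_of_notMem_tsupport
            intro hmem
            have := hRsupp hmem
            rw [mem_closedBall, dist_zero_right, norm_smul, Real.norm_eq_abs,
              abs_of_nonneg (inv_nonneg.2 hh.le)] at this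
            have h1 : c * ‖h • u‖ ≤ ‖φ (h • u) - φ 0‖ := hb
            rw [norm_smul, Real.norm_eq_abs, abs_of_nonneg hh.le] at h1
            have h2 : c * ‖u‖ ≤ h⁻¹ * ‖φ (h • u) - φ 0‖ := by
              rw [le_inv_mul_iff₀ hh]
              nlinarith
            have h3 : R < c * ‖u‖ := by
              rw [div_lt_iff₀ hc] at hu'
              linarith [mul_comm c ‖u‖]
            linarith
          simp [hgdef, hK0]
        · simp [hgdef, hf_supp _ hz]
    · rw [integrable_indicator_iff measurableSet_closedBall]
      exact integrableOn_const measure_closedBall_lt_top.ne enorm_ne_top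
    · filter_upwards with u
      have h1 : Tendsto (fun h : ℝ => h⁻¹ • (φ (h • u) - φ 0)) (nhdsWithin 0 (Set.Ioi 0))
          (nhds (L u)) := by
        have hder : HasFDerivAt φ L 0 := (hφ.differentiable one_ne_zero).differentiableAt.hasFDerivAt
        have hc' : Tendsto (fun h : ℝ => ‖h⁻¹‖) (nhdsWithin 0 (Set.Ioi 0)) atTop := by
          have : Tendsto (fun h : ℝ => h⁻¹) (nhdsWithin 0 (Set.Ioi 0)) atTop :=
            tendsto_inv_nhdsGT_zero
          exact tendsto_abs_atTop_atTop.comp this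
        have := hder.lim u hc'
        simpa [inv_inv] using this
      have h2 : Tendsto (fun h : ℝ => h • u) (nhdsWithin 0 (Set.Ioi 0)) (nhds 0) := by
        have : Tendsto (fun h : ℝ => h • u) (nhds (0:ℝ)) (nhds ((0:ℝ) • u)) :=
          (continuous_id.smul continuous_const).tendsto 0
        simpa using this.mono_left nhdsWithin_le_nhds
      have hKt : Tendsto (fun h : ℝ => K (h⁻¹ • (φ (h • u) - φ 0)) ^ 2)
          (nhdsWithin 0 (Set.Ioi 0)) (nhds (K (L u) ^ 2)) :=
        ((hK_cont.tendsto _).comp h1).pow 2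
      have hvt : Tendsto (fun h : ℝ => v (φ (h • u))) (nhdsWithin 0 (Set.Ioi 0))
          (nhds (v (φ 0))) := hv_cont.tendsto.comp ((hφcont.tendsto _).comp h2)
      have hft : Tendsto (fun h : ℝ => f (h • u)) (nhdsWithin 0 (Set.Ioi 0)) (nhds (f 0)) :=
        hf_cont.tendsto.comp h2
      exact (hKt.mul hvt).mul hft
  have heq : (∫ u, K (L u) ^ 2 * v (φ 0) * f 0) = f 0 * v (φ 0) * ∫ u, K (L u) ^ 2 := by
    calc (∫ u, K (L u) ^ 2 * v (φ 0) * f 0)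
        = ∫ u, (v (φ 0) * f 0) * K (L u) ^ 2 := by congr 1; funext u; ring
      _ = (v (φ 0) * f 0) * ∫ u, K (L u) ^ 2 := integral_const_mul _ _
      _ = f 0 * v (φ 0) * ∫ u, K (L u) ^ 2 := by ring
  rw [heq] at key
  apply key.congr'
  filter_upwards [self_mem_nhdsWithin] with h (hh : 0 < h)
  exact (step1 h hh).symm
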